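/- For all integers n \ge k \ge 0, the Bell polynomials of the second kind satisfy the convolution identity B_{n,k}(x_1+y_1, ..., x_{n-k+1}+y_{n-k+1}) = \sum_{r+s=k} \sum_{\ell+m=n} binom(n, \ell) B_{\ell,r}(x_1,...,x_{\ell-r+1}) B_{m,s}(y_1,...,y_{m-s+1}). -/

import Mathlib

open Nat

/-- The Bell polynomials of the second kind `B_{n,k}(x_1, x_2, …)`, where `x i` denotes `x_i`. -/
noncomputable def bellPoly (n k : ℕ) (x : ℕ → ℂ) : ℂ :=
  ∑ ℓ ∈ (Fintype.piFinset fun _ : Fin n => Finset.range (n + 1)).filter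
      (fun ℓ => (∑ i : Fin n, ((i : ℕ) + 1) * ℓ i) = n ∧ (∑ i : Fin n, ℓ i) = k),
    ((n ! : ℂ) / ∏ i : Fin n, ((ℓ i)! : ℂ)) *
      ∏ i : Fin n, (x ((i : ℕ) + 1) / (((i : ℕ) + 1)! : ℂ)) ^ ℓ i



lemma prod_extend {M : Type*} [CommMonoid M] {l n : ℕ} (h : l ≤ n) (f : ℕ → ℕ → M)
    (hf : ∀ j, f j 0 = 1) (a : Fin l → ℕ) :
    (∏ i : Fin n, f (i : ℕ) (if h' : (i : ℕ) < l then a ⟨i, h'⟩ else 0)) =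
      ∏ i : Fin l, f (i : ℕ) (a i) := by
  set g : ℕ → M := fun j => f j (if h' : j < l then a ⟨j, h'⟩ else 0) with hg
  calc (∏ i : Fin n, g (i : ℕ)) = ∏ j ∈ Finset.range n, g j :=
        Fin.prod_univ_eq_prod_range g n
    _ = ∏ j ∈ Finset.range l, g j := by
        refine (Finset.prod_subset (Finset.range_subset_range.2 h) fun j _ hj => ?_).symm
        simp only [hg]; rw [dif_neg (by simpa using hj), hf]
    _ = ∏ i : Fin l, g (i : ℕ) := (Fin.prod_univ_eq_prod_range g l).symm
    _ = ∏ i : Fin l, f (i : ℕ) (a i) := by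
        refine Finset.prod_congr rfl fun i _ => ?_
        simp only [hg]; rw [dif_pos i.isLt]

lemma sum_extend {M : Type*} [AddCommMonoid M] {l n : ℕ} (h : l ≤ n) (f : ℕ → ℕ → M)
    (hf : ∀ j, f j 0 = 0) (a : Fin l → ℕ) :
    (∑ i : Fin n, f (i : ℕ) (if h' : (i : ℕ) < l then a ⟨i, h'⟩ else 0)) =
      ∑ i : Fin l, f (i : ℕ) (a i) := by
  set g : ℕ → M := fun j => f j (if h' : j < l then a ⟨j, h'⟩ else 0) with hg
  calc (∑ i : Fin n, g (i : ℕ)) = ∑ j ∈ Finset.range n, g j :=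
        Fin.sum_univ_eq_sum_range g n
    _ = ∑ j ∈ Finset.range l, g j := by
        refine (Finset.sum_subset (Finset.range_subset_range.2 h) fun j _ hj => ?_).symm
        simp only [hg]; rw [dif_neg (by simpa using hj), hf]
    _ = ∑ i : Fin l, g (i : ℕ) := (Fin.sum_univ_eq_sum_range g l).symm
    _ = ∑ i : Fin l, f (i : ℕ) (a i) := by
        refine Finset.sum_congr rfl fun i _ => ?_
        simp only [hg]; rw [dif_pos i.isLt]

lemma val_le_of_wsum {n l : ℕ} {b : Fin n → ℕ}
    (hb : ∑ i : Fin n, ((i : ℕ) + 1) * b i = l) (j : Fin n) : b j ≤ l := by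
  calc b j ≤ ((j : ℕ) + 1) * b j := Nat.le_mul_of_pos_left _ (Nat.succ_pos _)
    _ ≤ ∑ i : Fin n, ((i : ℕ) + 1) * b i :=
        Finset.single_le_sum (f := fun i : Fin n => ((i:ℕ)+1) * b i) (fun i _ => Nat.zero_le _) (Finset.mem_univ j)
    _ = l := hb

lemma eq_zero_of_wsum {n l : ℕ} {b : Fin n → ℕ}
    (hb : ∑ i : Fin n, ((i : ℕ) + 1) * b i = l) (j : Fin n) (hj : l ≤ (j : ℕ)) : b j = 0 := by
  by_contra hne
  have h1 : 1 ≤ b j := Nat.one_le_iff_ne_zero.2 hne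
  have : (j : ℕ) + 1 ≤ l := by
    calc (j : ℕ) + 1 ≤ ((j : ℕ) + 1) * b j := Nat.le_mul_of_pos_right _ h1
      _ ≤ ∑ i : Fin n, ((i : ℕ) + 1) * b i :=
          Finset.single_le_sum (f := fun i : Fin n => ((i:ℕ)+1) * b i) (fun i _ => Nat.zero_le _) (Finset.mem_univ j)
      _ = l := hb
  omega

/-- tuples of length `n` with weighted sum `l` and plain sum `r`. -/
def bSet (n l r : ℕ) : Finset (Fin n → ℕ) :=
  (Fintype.piFinset fun _ : Fin n => Finset.range (n + 1)).filter
      (fun a => (∑ i : Fin n, ((i : ℕ) + 1) * a i) = l ∧ (∑ i : Fin n, a i) = r)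

lemma mem_bSet {n l r : ℕ} {a : Fin n → ℕ} :
    a ∈ bSet n l r ↔ (∀ i, a i ≤ n) ∧ (∑ i : Fin n, ((i : ℕ) + 1) * a i) = l ∧
      (∑ i : Fin n, a i) = r := by
  simp [bSet, Fintype.mem_piFinset, Nat.lt_succ_iff]

lemma bellPoly_eq_bSet (n k : ℕ) (x : ℕ → ℂ) :
    bellPoly n k x = ∑ a ∈ bSet n n k,
      ((n ! : ℂ) / ∏ i : Fin n, ((a i)! : ℂ)) *
        ∏ i : Fin n, (x ((i : ℕ) + 1) / (((i : ℕ) + 1)! : ℂ)) ^ a i := rfl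

/-- extend a tuple on `Fin l` by zero to `Fin n` -/
def ext0 (l n : ℕ) (a : Fin l → ℕ) : Fin n → ℕ :=
  fun i => if h' : (i : ℕ) < l then a ⟨i, h'⟩ else 0

lemma bellPoly_eq_sum (n l r : ℕ) (h : l ≤ n) (x : ℕ → ℂ) :
    bellPoly l r x = ∑ a ∈ bSet n l r,
      ((l ! : ℂ) / ∏ i : Fin n, ((a i)! : ℂ)) *
        ∏ i : Fin n, (x ((i : ℕ) + 1) / (((i : ℕ) + 1)! : ℂ)) ^ a i := by
  rw [bellPoly_eq_bSet]
  refine Finset.sum_of_injOn (ext0 l n) ?_ ?_ ?_ ?_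
  · -- injective on the set
    intro a _ a' _ hee
    funext i
    have := congrFun hee (Fin.castLE h i)
    simpa [ext0, i.isLt] using this
  · -- maps to
    intro a ha
    rw [Finset.mem_coe, mem_bSet] at ha
    rw [Finset.mem_coe, mem_bSet]
    obtain ⟨hb, h1, h2⟩ := ha
    refine ⟨fun i => ?_, ?_, ?_⟩
    · by_cases h' : (i : ℕ) < l
      · simpa [ext0, h'] using le_trans (hb ⟨i, h'⟩) h
      · simp [ext0, h']
    · simp only [ext0]
      exact (sum_extend h (fun j c => (j + 1) * c) (by simp) a).trans h1
    · simp only [ext0]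
      exact (sum_extend h (fun j c => c) (by simp) a).trans h2
  · -- everything in target is in the image
    intro b hb hni
    exfalso
    apply hni
    rw [Set.mem_image]
    have hb' := hb
    rw [mem_bSet] at hb'
    obtain ⟨hble, h1, h2⟩ := hb'
    refine ⟨fun i => b (Fin.castLE h i), ?_, ?_⟩
    · rw [Finset.mem_coe, mem_bSet]
      refine ⟨fun i => le_trans (val_le_of_wsum h1 _) le_rfl, ?_, ?_⟩
      · refine Eq.trans ((sum_extend h (fun j c => (j + 1) * c) (by simp)
          (fun i => b (Fin.castLE h i))).symm.trans ?_) h1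
        refine Finset.sum_congr rfl fun i _ => ?_
        by_cases h' : (i : ℕ) < l
        · simp [h', Fin.castLE]
        · rw [dif_neg h', eq_zero_of_wsum h1 i (le_of_not_gt h')]
      · refine Eq.trans ((sum_extend h (fun j c => c) (by simp)
          (fun i => b (Fin.castLE h i))).symm.trans ?_) h2
        refine Finset.sum_congr rfl fun i _ => ?_
        by_cases h' : (i : ℕ) < l
        · simp [h', Fin.castLE]
        · rw [dif_neg h', eq_zero_of_wsum h1 i (le_of_not_gt h')]
    · funext i
      by_cases h' : (i : ℕ) < l
      · simp [ext0, h', Fin.castLE]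
      · rw [show ext0 l n (fun i => b (Fin.castLE h i)) i = 0 from dif_neg h',
          eq_zero_of_wsum h1 i (le_of_not_gt h')]
  · -- summand equality
    intro a ha
    rw [mem_bSet] at ha
    congr 1
    · congr 1
      exact (prod_extend h (fun j c => ((c)! : ℂ)) (by simp) a).symm
    · exact (prod_extend h (fun j c => (x (j + 1) / ((j + 1)! : ℂ)) ^ c) (by simp) a).symm

def pSet (n k : ℕ) : Finset ((Fin n → ℕ) × (Fin n → ℕ)) :=
  ((Fintype.piFinset fun _ : Fin n => Finset.range (n + 1)) ×ˢ
    (Fintype.piFinset fun _ : Fin n => Finset.range (n + 1))).filter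
      (fun p => (∑ i : Fin n, ((i : ℕ) + 1) * (p.1 i + p.2 i)) = n ∧
        (∑ i : Fin n, (p.1 i + p.2 i)) = k)

lemma mem_pSet {n k : ℕ} {p : (Fin n → ℕ) × (Fin n → ℕ)} :
    p ∈ pSet n k ↔ (∀ i, p.1 i ≤ n) ∧ (∀ i, p.2 i ≤ n) ∧
      (∑ i : Fin n, ((i : ℕ) + 1) * (p.1 i + p.2 i)) = n ∧
      (∑ i : Fin n, (p.1 i + p.2 i)) = k := by
  simp [pSet, Fintype.mem_piFinset, Nat.lt_succ_iff, Finset.mem_product, and_assoc]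

noncomputable def Gterm (n : ℕ) (x y : ℕ → ℂ) (a b : Fin n → ℕ) : ℂ :=
  (n ! : ℂ) / ((∏ i : Fin n, ((a i)! : ℂ)) * ∏ i : Fin n, ((b i)! : ℂ)) *
    ((∏ i : Fin n, (x ((i : ℕ) + 1) / (((i : ℕ) + 1)! : ℂ)) ^ a i) *
     (∏ i : Fin n, (y ((i : ℕ) + 1) / (((i : ℕ) + 1)! : ℂ)) ^ b i))

lemma prod_fact_ne_zero {n : ℕ} (a : Fin n → ℕ) : (∏ i : Fin n, ((a i)! : ℂ)) ≠ 0 :=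
  Finset.prod_ne_zero_iff.2 fun i _ => Nat.cast_ne_zero.2 (Nat.factorial_ne_zero _)

lemma lhs_eq (n k : ℕ) (x y : ℕ → ℂ) :
    (∑ ℓ ∈ bSet n n k,
      ((n ! : ℂ) / ∏ i : Fin n, ((ℓ i)! : ℂ)) *
        ∏ i : Fin n, ((x ((i : ℕ) + 1) + y ((i : ℕ) + 1)) / (((i : ℕ) + 1)! : ℂ)) ^ ℓ i)
    = ∑ p ∈ pSet n k, Gterm n x y p.1 p.2 := by
  have step1 : ∀ ℓ ∈ bSet n n k,
      ((n ! : ℂ) / ∏ i : Fin n, ((ℓ i)! : ℂ)) *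
        ∏ i : Fin n, ((x ((i:ℕ)+1) + y ((i:ℕ)+1)) / (((i:ℕ)+1)! : ℂ)) ^ ℓ i
      = ∑ a ∈ Fintype.piFinset (fun i : Fin n => Finset.range (ℓ i + 1)),
          ((n ! : ℂ) / ∏ i : Fin n, ((ℓ i)! : ℂ)) *
          ∏ i : Fin n, ((x ((i:ℕ)+1)/(((i:ℕ)+1)! : ℂ)) ^ a i *
            (y ((i:ℕ)+1)/(((i:ℕ)+1)! : ℂ)) ^ (ℓ i - a i) * ((ℓ i).choose (a i) : ℂ)) := by
    intro ℓ _
    rw [← Finset.mul_sum]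
    congr 1
    calc (∏ i : Fin n, ((x ((i:ℕ)+1) + y ((i:ℕ)+1)) / (((i:ℕ)+1)! : ℂ)) ^ ℓ i)
        = ∏ i : Fin n, ∑ c ∈ Finset.range (ℓ i + 1),
            (x ((i:ℕ)+1)/(((i:ℕ)+1)! : ℂ)) ^ c *
            (y ((i:ℕ)+1)/(((i:ℕ)+1)! : ℂ)) ^ (ℓ i - c) * ((ℓ i).choose c : ℂ) := by
          refine Finset.prod_congr rfl fun i _ => ?_
          rw [_root_.add_div, add_pow]
      _ = _ := Finset.prod_univ_sum (fun i => Finset.range (ℓ i + 1))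
            (fun i c => (x ((i:ℕ)+1)/(((i:ℕ)+1)! : ℂ)) ^ c *
              (y ((i:ℕ)+1)/(((i:ℕ)+1)! : ℂ)) ^ (ℓ i - c) * ((ℓ i).choose c : ℂ))
  rw [Finset.sum_congr rfl step1, Finset.sum_sigma']
  refine Finset.sum_nbij' (fun p => (p.2, fun i => p.1 i - p.2 i))
    (fun q => (⟨fun i => q.1 i + q.2 i, q.1⟩ : Σ _ : Fin n → ℕ, Fin n → ℕ)) ?_ ?_ ?_ ?_ ?_
  · -- forward membership
    rintro ⟨ℓ, a⟩ hp
    rw [Finset.mem_sigma] at hp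
    obtain ⟨hℓ, ha⟩ := hp
    rw [mem_pSet]
    rw [bSet, Finset.mem_filter, Fintype.mem_piFinset] at hℓ
    obtain ⟨hℓb, h1, h2⟩ := hℓ
    rw [Fintype.mem_piFinset] at ha
    have hale : ∀ i, a i ≤ ℓ i := fun i => Nat.lt_succ_iff.1 (by simpa using ha i)
    have hsum : ∀ i, a i + (ℓ i - a i) = ℓ i := fun i => Nat.add_sub_cancel' (hale i)
    refine ⟨fun i => le_trans (hale i) (Nat.lt_succ_iff.1 (by simpa using hℓb i)),
      fun i => le_trans (Nat.sub_le _ _) (Nat.lt_succ_iff.1 (by simpa using hℓb i)), ?_, ?_⟩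
    · simpa only [hsum] using h1
    · simpa only [hsum] using h2
  · -- backward membership
    rintro ⟨a, b⟩ hq
    rw [mem_pSet] at hq
    obtain ⟨ha, hb, h1, h2⟩ := hq
    rw [Finset.mem_sigma]
    constructor
    · rw [bSet, Finset.mem_filter, Fintype.mem_piFinset]
      refine ⟨fun i => ?_, h1, h2⟩
      simp only [Finset.mem_range, Nat.lt_succ_iff]
      calc a i + b i ≤ ((i : ℕ) + 1) * (a i + b i) := Nat.le_mul_of_pos_left _ (Nat.succ_pos _)
        _ ≤ ∑ j : Fin n, ((j : ℕ) + 1) * (a j + b j) :=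
            Finset.single_le_sum (f := fun j : Fin n => ((j:ℕ)+1) * (a j + b j))
              (fun j _ => Nat.zero_le _) (Finset.mem_univ i)
        _ = n := h1
    · rw [Fintype.mem_piFinset]
      intro i
      simp only [Finset.mem_range, Nat.lt_succ_iff]
      exact Nat.le_add_right _ _
  · -- left inverse
    rintro ⟨ℓ, a⟩ hp
    rw [Finset.mem_sigma] at hp
    obtain ⟨-, ha⟩ := hp
    rw [Fintype.mem_piFinset] at ha
    have hale : ∀ i, a i ≤ ℓ i := fun i => Nat.lt_succ_iff.1 (by simpa using ha i)
    simp only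
    congr 1
    · funext i; exact Nat.add_sub_cancel' (hale i)
  · -- right inverse
    rintro ⟨a, b⟩ _
    simp only
    congr 1
    funext i
    exact Nat.add_sub_cancel_left _ _
  · -- term equality
    rintro ⟨ℓ, a⟩ hp
    rw [Finset.mem_sigma] at hp
    obtain ⟨hℓ, ha⟩ := hp
    rw [Fintype.mem_piFinset] at ha
    have hale : ∀ i, a i ≤ ℓ i := fun i => Nat.lt_succ_iff.1 (by simpa using ha i)
    dsimp only
    simp only [Gterm]
    rw [Finset.prod_mul_distrib, Finset.prod_mul_distrib]
    have key : (∏ i : Fin n, (((ℓ i).choose (a i) : ℕ) : ℂ)) *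
        ((∏ i : Fin n, ((a i)! : ℂ)) * ∏ i : Fin n, (((ℓ i - a i))! : ℂ))
        = ∏ i : Fin n, ((ℓ i)! : ℂ) := by
      rw [← Finset.prod_mul_distrib, ← Finset.prod_mul_distrib]
      refine Finset.prod_congr rfl fun i _ => ?_
      rw [← mul_assoc]
      push_cast [← Nat.choose_mul_factorial_mul_factorial (hale i)]
      ring
    have h1 := prod_fact_ne_zero ℓ
    have h2 := prod_fact_ne_zero a
    have h3 := prod_fact_ne_zero (fun i => ℓ i - a i)
    rw [div_mul_eq_mul_div, div_mul_eq_mul_div,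
      div_eq_div_iff h1 (mul_ne_zero h2 h3), ← key]
    ring

lemma wsum_split {n : ℕ} (a b : Fin n → ℕ) :
    (∑ i : Fin n, ((i : ℕ) + 1) * (a i + b i)) =
      (∑ i : Fin n, ((i : ℕ) + 1) * a i) + ∑ i : Fin n, ((i : ℕ) + 1) * b i := by
  rw [← Finset.sum_add_distrib]
  exact Finset.sum_congr rfl fun i _ => mul_add _ _ _

lemma sum_split {n : ℕ} (a b : Fin n → ℕ) :
    (∑ i : Fin n, (a i + b i)) = (∑ i : Fin n, a i) + ∑ i : Fin n, b i :=
  Finset.sum_add_distrib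

lemma scalar_helper (A B P Q C lf mf nf : ℂ) (hA : A ≠ 0) (hB : B ≠ 0)
    (h : C * lf * mf = nf) : C * ((lf / A * P) * (mf / B * Q)) = nf / (A * B) * (P * Q) := by
  field_simp [← h]
  rw [← h]
  ring

lemma rhs_eq (n k : ℕ) (x y : ℕ → ℂ) :
    (∑ rs ∈ Finset.HasAntidiagonal.antidiagonal k, ∑ lm ∈ Finset.HasAntidiagonal.antidiagonal n,
        (n.choose lm.1 : ℂ) * bellPoly lm.1 rs.1 x * bellPoly lm.2 rs.2 y)
    = ∑ p ∈ pSet n k, Gterm n x y p.1 p.2 := by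
  have step1 : ∀ rs ∈ Finset.HasAntidiagonal.antidiagonal k, ∀ lm ∈ Finset.HasAntidiagonal.antidiagonal n,
      (n.choose lm.1 : ℂ) * bellPoly lm.1 rs.1 x * bellPoly lm.2 rs.2 y
      = ∑ p ∈ (bSet n lm.1 rs.1) ×ˢ (bSet n lm.2 rs.2), Gterm n x y p.1 p.2 := by
    intro rs hrs lm hlm
    rw [Finset.HasAntidiagonal.mem_antidiagonal] at hlm
    have hl : lm.1 ≤ n := le_trans (Nat.le_add_right _ _) hlm.le
    have hm : lm.2 ≤ n := le_trans (Nat.le_add_left _ _) hlm.le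
    rw [bellPoly_eq_sum n lm.1 rs.1 hl x, bellPoly_eq_sum n lm.2 rs.2 hm y,
      mul_assoc, Finset.sum_mul_sum, Finset.mul_sum, Finset.sum_product]
    refine Finset.sum_congr rfl fun a ha => ?_
    rw [Finset.mul_sum]
    refine Finset.sum_congr rfl fun b hb => ?_
    simp only [Gterm]
    have hfact : ((n.choose lm.1 : ℕ) : ℂ) * (lm.1)! * (lm.2)! = (n !) := by
      have := Nat.choose_mul_factorial_mul_factorial hl
      rw [show n - lm.1 = lm.2 by omega] at this
      push_cast [← this]
      ring
    exact scalar_helper _ _ _ _ _ _ _ _ (prod_fact_ne_zero a) (prod_fact_ne_zero b) hfact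
  rw [Finset.sum_congr rfl fun rs hrs =>
    Finset.sum_congr rfl fun lm hlm => step1 rs hrs lm hlm]
  rw [← Finset.sum_product' (s := Finset.HasAntidiagonal.antidiagonal k) (t := Finset.HasAntidiagonal.antidiagonal n)
    (f := fun rs lm => ∑ p ∈ (bSet n lm.1 rs.1) ×ˢ (bSet n lm.2 rs.2), Gterm n x y p.1 p.2)]
  have hmap : ∀ p ∈ pSet n k,
      (((∑ i : Fin n, p.1 i, ∑ i : Fin n, p.2 i) : ℕ × ℕ),
        ((∑ i : Fin n, ((i : ℕ) + 1) * p.1 i, ∑ i : Fin n, ((i : ℕ) + 1) * p.2 i) : ℕ × ℕ)) ∈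
        Finset.HasAntidiagonal.antidiagonal k ×ˢ Finset.HasAntidiagonal.antidiagonal n := by
    intro p hp
    rw [mem_pSet] at hp
    obtain ⟨-, -, h1, h2⟩ := hp
    rw [Finset.mem_product, Finset.HasAntidiagonal.mem_antidiagonal, Finset.HasAntidiagonal.mem_antidiagonal]
    rw [wsum_split] at h1
    rw [sum_split] at h2
    exact ⟨h2, h1⟩
  rw [← Finset.sum_fiberwise_of_maps_to hmap (fun p => Gterm n x y p.1 p.2)]
  refine Finset.sum_congr rfl fun q hq => ?_
  obtain ⟨⟨r, s⟩, ⟨l, m⟩⟩ := q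
  rw [Finset.mem_product, Finset.HasAntidiagonal.mem_antidiagonal, Finset.HasAntidiagonal.mem_antidiagonal] at hq
  obtain ⟨hq1, hq2⟩ := hq
  simp only at hq1 hq2
  refine Finset.sum_congr ?_ fun _ _ => rfl
  ext p
  simp only [Finset.mem_filter, Finset.mem_product, mem_pSet, mem_bSet, Prod.mk.injEq]
  constructor
  · rintro ⟨⟨hb1, e3, e1⟩, hb2, e4, e2⟩
    exact ⟨⟨hb1, hb2, by rw [wsum_split, e3, e4, hq2], by rw [sum_split, e1, e2, hq1]⟩,
      ⟨e1, e2⟩, e3, e4⟩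
  · rintro ⟨⟨hb1, hb2, hw, hs⟩, ⟨⟨e1, e2⟩, e3, e4⟩⟩
    exact ⟨⟨hb1, e3, e1⟩, hb2, e4, e2⟩

theorem bellPoly_add (n k : ℕ) (hkn : k ≤ n) (x y : ℕ → ℂ) :
    bellPoly n k (fun i => x i + y i) =
      ∑ rs ∈ Finset.HasAntidiagonal.antidiagonal k, ∑ lm ∈ Finset.HasAntidiagonal.antidiagonal n,
        (n.choose lm.1 : ℂ) * bellPoly lm.1 rs.1 x * bellPoly lm.2 rs.2 y := by
  rw [rhs_eq n k x y, bellPoly_eq_bSet]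
  exact lhs_eq n k x y
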